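/- A lower solution is below its image under the periodic integral operator: if α ∈ C¹[0,S] satisfies α'(t) ≤ f(t, α(t)) on [0,S] and α(0) ≤ α(S), then α(t) ≤ (Fα)(t) for all t ∈ [0,S], where (Fα)(t) = ∫₀ˢ G(t, z)[f(z, α(z)) + a·α(z)] dz. -/

import Mathlib

open Set

/-- A lower solution of the periodic BVP lies below its image under the integral
operator. -/
theorem lower_solution_le_integral_operator
    (S a : ℝ) (hS : 0 < S) (ha : 0 < a)
    (f : ℝ → ℝ → ℝ) (hf : Continuous fun p : ℝ × ℝ => f p.1 p.2)
    (α α' : ℝ → ℝ)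
    (hderiv : ∀ t ∈ Icc (0 : ℝ) S, HasDerivWithinAt α (α' t) (Icc 0 S) t)
    (hineq : ∀ t ∈ Icc (0 : ℝ) S, α' t ≤ f t (α t))
    (hbc : α 0 ≤ α S) :
    ∀ t ∈ Icc (0 : ℝ) S,
      α t ≤ ∫ z in (0 : ℝ)..S,
        ((if z < t then Real.exp (a * (S + z - t)) else Real.exp (a * (z - t))) /
          (Real.exp (a * S) - 1)) * (f z (α z) + a * α z) := by
  -- clamp function
  set π : ℝ → ℝ := fun z => min (max z 0) S with hπ
  have hπcont : Continuous π := (continuous_id.max continuous_const).min continuous_const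
  have hπmem : ∀ z, π z ∈ Icc (0 : ℝ) S := fun z =>
    ⟨le_min (le_max_right _ _) hS.le, min_le_right _ _⟩
  have hπid : ∀ z ∈ Icc (0 : ℝ) S, π z = z := by
    intro z hz
    simp [hπ, max_eq_left hz.1, min_eq_left hz.2]
  have hαcont : ContinuousOn α (Icc 0 S) := fun x hx => (hderiv x hx).continuousWithinAt
  -- extended α
  set αc : ℝ → ℝ := fun z => α (π z) with hαc
  have hαccont : Continuous αc := hαcont.comp_continuous hπcont hπmem
  have hαceq : ∀ z ∈ Icc (0 : ℝ) S, αc z = α z := fun z hz => by rw [hαc]; simp [hπid z hz]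
  -- extended integrand
  set hc : ℝ → ℝ := fun z => Real.exp (a * z) * (f z (αc z) + a * αc z) with hhc
  have hccont : Continuous hc := by
    apply Continuous.mul
    · exact Real.continuous_exp.comp (continuous_const.mul continuous_id)
    · exact (hf.comp (continuous_id.prodMk hαccont)).add (continuous_const.mul hαccont)
  -- antiderivative
  set F : ℝ → ℝ := fun x => ∫ z in (0 : ℝ)..x, hc z with hF
  have hFderiv : ∀ x : ℝ, HasDerivAt F (hc x) x := by
    intro x
    exact intervalIntegral.integral_hasDerivAt_right
      (hccont.intervalIntegrable _ _)
      (hccont.aestronglyMeasurable.stronglyMeasurableAtFilter)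
      hccont.continuousAt
  -- the key monotone function ψ
  set ψ : ℝ → ℝ := fun x => F x - Real.exp (a * x) * α x with hψ
  have hψmono : MonotoneOn ψ (Icc 0 S) := by
    apply monotoneOn_of_hasDerivWithinAt_nonneg (convex_Icc 0 S)
      (f' := fun x => hc x - Real.exp (a * x) * (α' x + a * α x))
    · apply ContinuousOn.sub
      · exact (continuous_iff_continuousAt.2 fun x => (hFderiv x).continuousAt).continuousOn
      · exact (Real.continuous_exp.comp (continuous_const.mul continuous_id)).continuousOn.mul
          hαcont
    · intro x hx
      rw [interior_Icc] at hx
      have hx' : x ∈ Icc (0 : ℝ) S := Ioo_subset_Icc_self hx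
      have h1 : HasDerivWithinAt F (hc x) (Ioo 0 S) x := (hFderiv x).hasDerivWithinAt
      have h2 : HasDerivWithinAt (fun y => Real.exp (a * y) * α y)
          (Real.exp (a * x) * (α' x + a * α x)) (Ioo 0 S) x := by
        have he : HasDerivWithinAt (fun y => Real.exp (a * y)) (a * Real.exp (a * x))
            (Ioo 0 S) x := by
          have := ((hasDerivAt_id x).const_mul a).exp
          simpa [mul_comm] using this.hasDerivWithinAt
        have hα' : HasDerivWithinAt α (α' x) (Ioo 0 S) x :=
          (hderiv x hx').mono Ioo_subset_Icc_self
        have := he.mul hα'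
        convert this using 1
        · rfl
        · rfl
        · rfl
        · ring
      rw [interior_Icc]
      exact h1.sub h2
    · intro x hx
      rw [interior_Icc] at hx
      have hx' : x ∈ Icc (0 : ℝ) S := Ioo_subset_Icc_self hx
      have : α' x ≤ f x (α x) := hineq x hx'
      have hcx : hc x = Real.exp (a * x) * (f x (α x) + a * α x) := by
        rw [hhc]; simp [hαceq x hx']
      rw [hcx]
      have := Real.exp_pos (a * x)
      nlinarith
  -- key inequality: for u ≤ v in [0,S], exp(av) α v - exp(au) α u ≤ ∫ u..v hc
  have hkey : ∀ u ∈ Icc (0:ℝ) S, ∀ v ∈ Icc (0:ℝ) S, u ≤ v →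
      Real.exp (a * v) * α v - Real.exp (a * u) * α u ≤ ∫ z in u..v, hc z := by
    intro u hu v hv huv
    have := hψmono hu hv huv
    have hsplit : (∫ z in (0:ℝ)..u, hc z) + ∫ z in u..v, hc z = ∫ z in (0:ℝ)..v, hc z :=
      intervalIntegral.integral_add_adjacent_intervals
        (hccont.intervalIntegrable _ _) (hccont.intervalIntegrable _ _)
    simp only [hψ, hF] at this
    linarith [hsplit]
  intro t ht
  set C := Real.exp (a * S) - 1 with hCdef
  have hCpos : 0 < C := by
    have : (1:ℝ) < Real.exp (a * S) := by
      rw [show (1:ℝ) = Real.exp 0 by simp]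
      exact Real.exp_lt_exp.2 (by positivity)
    linarith
  -- split the goal integral at t
  set G : ℝ → ℝ := fun z =>
    ((if z < t then Real.exp (a * (S + z - t)) else Real.exp (a * (z - t))) / C) *
      (f z (α z) + a * α z) with hG
  -- on (0, t], G agrees a.e. with a multiple of hc
  have hae1 : ∀ᵐ z ∂MeasureTheory.volume, z ∈ Set.uIoc (0:ℝ) t →
      G z = (Real.exp (a * (S - t)) / C) * hc z := by
    have hne : ∀ᵐ z ∂(MeasureTheory.volume : MeasureTheory.Measure ℝ), z ≠ t := by
      rw [MeasureTheory.ae_iff]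
      simpa [Set.setOf_eq_eq_singleton] using
        (MeasureTheory.measure_singleton (t : ℝ) : MeasureTheory.volume {t} = 0)
    filter_upwards [hne] with z hz hzmem
    rw [Set.uIoc_of_le ht.1] at hzmem
    have hzlt : z < t := lt_of_le_of_ne hzmem.2 hz
    have hzIcc : z ∈ Icc (0:ℝ) S := ⟨hzmem.1.le, hzmem.2.trans ht.2⟩
    show ((if z < t then Real.exp (a * (S + z - t)) else Real.exp (a * (z - t))) / C) *
        (f z (α z) + a * α z)
      = (Real.exp (a * (S - t)) / C) * (Real.exp (a * z) * (f z (αc z) + a * αc z))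
    rw [if_pos hzlt, hαceq z hzIcc]
    rw [show a * (S + z - t) = a * (S - t) + a * z by ring, Real.exp_add]
    ring
  have hae2 : ∀ᵐ z ∂MeasureTheory.volume, z ∈ Set.uIoc t S →
      G z = (Real.exp (a * (-t)) / C) * hc z := by
    filter_upwards with z hzmem
    rw [Set.uIoc_of_le ht.2] at hzmem
    have hzlt : ¬ z < t := not_lt.2 hzmem.1.le
    have hzIcc : z ∈ Icc (0:ℝ) S := ⟨ht.1.trans hzmem.1.le, hzmem.2⟩
    show ((if z < t then Real.exp (a * (S + z - t)) else Real.exp (a * (z - t))) / C) *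
        (f z (α z) + a * α z)
      = (Real.exp (a * (-t)) / C) * (Real.exp (a * z) * (f z (αc z) + a * αc z))
    rw [if_neg hzlt, hαceq z hzIcc]
    rw [show a * (z - t) = a * (-t) + a * z by ring, Real.exp_add]
    ring
  have hint1 : IntervalIntegrable G MeasureTheory.volume 0 t := by
    apply IntervalIntegrable.congr_ae
      (((continuous_const.mul hccont).intervalIntegrable 0 t))
    exact (MeasureTheory.ae_restrict_iff' measurableSet_uIoc).2
      (hae1.mono fun z h hz => (h hz).symm)
  have hint2 : IntervalIntegrable G MeasureTheory.volume t S := by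
    apply IntervalIntegrable.congr_ae
      (((continuous_const.mul hccont).intervalIntegrable t S))
    exact (MeasureTheory.ae_restrict_iff' measurableSet_uIoc).2
      (hae2.mono fun z h hz => (h hz).symm)
  have hsplit : (∫ z in (0:ℝ)..t, G z) + ∫ z in t..S, G z = ∫ z in (0:ℝ)..S, G z :=
    intervalIntegral.integral_add_adjacent_intervals hint1 hint2
  have heq1 : (∫ z in (0:ℝ)..t, G z)
      = (Real.exp (a * (S - t)) / C) * ∫ z in (0:ℝ)..t, hc z := by
    rw [intervalIntegral.integral_congr_ae hae1, intervalIntegral.integral_const_mul]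
  have heq2 : (∫ z in t..S, G z)
      = (Real.exp (a * (-t)) / C) * ∫ z in t..S, hc z := by
    rw [intervalIntegral.integral_congr_ae hae2, intervalIntegral.integral_const_mul]
  have h1 : Real.exp (a * t) * α t - Real.exp (a * 0) * α 0 ≤ ∫ z in (0:ℝ)..t, hc z :=
    hkey 0 ⟨le_refl 0, hS.le⟩ t ht ht.1
  have h2 : Real.exp (a * S) * α S - Real.exp (a * t) * α t ≤ ∫ z in t..S, hc z :=
    hkey t ht S ⟨hS.le, le_refl S⟩ ht.2
  have hgoal : α t ≤ ∫ z in (0:ℝ)..S, G z := by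
    rw [← hsplit, heq1, heq2]
    rw [div_mul_eq_mul_div, div_mul_eq_mul_div, ← add_div, le_div_iff₀ hCpos]
    have e1 : Real.exp (a * (S - t)) * Real.exp (a * t) = Real.exp (a * S) := by
      rw [← Real.exp_add]; ring_nf
    have e2 : Real.exp (a * (-t)) * Real.exp (a * t) = 1 := by
      rw [← Real.exp_add]; ring_nf; exact Real.exp_zero
    have e3 : Real.exp (a * (-t)) * Real.exp (a * S) = Real.exp (a * (S - t)) := by
      rw [← Real.exp_add]; ring_nf
    have hb1' : Real.exp (a * (S - t)) * (Real.exp (a * t) * α t - Real.exp (a * 0) * α 0)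
        ≤ Real.exp (a * (S - t)) * ∫ z in (0:ℝ)..t, hc z :=
      mul_le_mul_of_nonneg_left h1 (Real.exp_pos _).le
    have hb2' : Real.exp (a * (-t)) * (Real.exp (a * S) * α S - Real.exp (a * t) * α t)
        ≤ Real.exp (a * (-t)) * ∫ z in t..S, hc z :=
      mul_le_mul_of_nonneg_left h2 (Real.exp_pos _).le
    rw [mul_zero, Real.exp_zero] at hb1'
    have q1 : Real.exp (a * (S - t)) * (Real.exp (a * t) * α t) = Real.exp (a * S) * α t := by
      rw [← mul_assoc, e1]
    have q2 : Real.exp (a * (-t)) * (Real.exp (a * t) * α t) = α t := by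
      rw [← mul_assoc, e2, one_mul]
    have q3 : Real.exp (a * (-t)) * (Real.exp (a * S) * α S)
        = Real.exp (a * (S - t)) * α S := by
      rw [← mul_assoc, e3]
    have q4 : Real.exp (a * (S - t)) * α 0 ≤ Real.exp (a * (S - t)) * α S :=
      mul_le_mul_of_nonneg_left hbc (Real.exp_pos _).le
    rw [hCdef]
    nlinarith [hb1', hb2', q1, q2, q3, q4]
  simpa [hG, hCdef] using hgoal
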